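/- For every integer n ≥ 1, the polynomial (X−1)² divides C_n(X) in ℤ[X], and the quotient P_n(X) = C_n(X)/(X−1)² is a monic polynomial of degree 2n−2 all of whose coefficients are non-negative integers. -/

import Mathlib

/-- The coefficients `c_{n,i}` from the paper. -/
def cCoeff (n i : ℕ) : ℤ :=
  if i = 0 then
    ∑ k ∈ Finset.Icc 1 (2 * n), if 2 * n = k * (k + 1) then 2 * (-1 : ℤ) ^ k else 0
  else
    ∑ k ∈ Finset.Icc 1 (2 * n),
      ((if 2 * n = k * (k + 2 * i + 1) then (-1 : ℤ) ^ k else 0) +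
        (if 2 * n = k * (k + 2 * i - 1) then (-1 : ℤ) ^ (k - 1) else 0))

/-- The polynomial `C_n(X) = c_{n,0} X^n + ∑_{i=1}^n c_{n,i} (X^{n+i} + X^{n-i}) ∈ ℤ[X]`. -/
noncomputable def Cpoly (n : ℕ) : Polynomial ℤ :=
  Polynomial.C (cCoeff n 0) * Polynomial.X ^ n +
    ∑ i ∈ Finset.Icc 1 n,
      Polynomial.C (cCoeff n i) * (Polynomial.X ^ (n + i) + Polynomial.X ^ (n - i))

open Polynomial Finset

def Fset (n : ℕ) : Finset (ℕ × ℕ) :=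
  (Nat.divisorsAntidiagonal (2*n)).filter (fun p => p.1 < p.2 ∧ Odd (p.1 + p.2))

def i0 (p : ℕ × ℕ) : ℕ := (p.2 - p.1 + 1) / 2

noncomputable def Ppoly (n : ℕ) : Polynomial ℤ :=
  ∑ p ∈ Fset n, Polynomial.C ((-1:ℤ)^(p.1-1)) *
    ∑ t ∈ Finset.range (p.2 - p.1), X ^ (n - i0 p + t)

noncomputable def Bp (n i : ℕ) : Polynomial ℤ := X^(n+i) + X^(n-i)

lemma Fset_facts {n : ℕ} {p : ℕ × ℕ} (hp : p ∈ Fset n) :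
    p.1 * p.2 = 2*n ∧ 1 ≤ p.1 ∧ p.2 ≤ 2*n ∧ p.1 < p.2 ∧
    p.2 - p.1 = 2 * i0 p - 1 ∧ 1 ≤ i0 p ∧ i0 p ≤ n := by
  simp only [Fset, mem_filter, Nat.mem_divisorsAntidiagonal] at hp
  obtain ⟨⟨hmul, hne⟩, hlt, hodd⟩ := hp
  obtain ⟨m, hm⟩ := hodd
  have h1 : 1 ≤ p.1 := by
    rcases Nat.eq_zero_or_pos p.1 with h | h
    · simp [h] at hmul; omega
    · exact h
  have h2 : p.2 ≤ 2*n := Nat.le_of_dvd (by omega) ⟨p.1, by rw [← hmul]; ring⟩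
  refine ⟨hmul, h1, h2, hlt, ?_, ?_, ?_⟩ <;> unfold i0 <;> omega

lemma mem_Fset {n : ℕ} {k i : ℕ} (hn : 1 ≤ n) (hk : 1 ≤ k) (hi : 1 ≤ i)
    (h : 2*n = k*(k+2*i-1)) : (k, k+2*i-1) ∈ Fset n := by
  simp only [Fset, mem_filter, Nat.mem_divisorsAntidiagonal]
  refine ⟨⟨h.symm, by omega⟩, by omega, ⟨k + i - 1, by omega⟩⟩

lemma mem_Fset' {n : ℕ} {k i : ℕ} (hn : 1 ≤ n) (hk : 1 ≤ k)
    (h : 2*n = k*(k+2*i+1)) : (k, k+2*i+1) ∈ Fset n := by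
  simp only [Fset, mem_filter, Nat.mem_divisorsAntidiagonal]
  exact ⟨⟨h.symm, by omega⟩, by omega, ⟨k + i, by omega⟩⟩

lemma neg_pow_pred {k : ℕ} (hk : 1 ≤ k) : (-1:ℤ)^k = -(-1:ℤ)^(k-1) := by
  have h2 : k - 1 + 1 = k := by omega
  calc (-1:ℤ)^k = (-1:ℤ)^(k-1+1) := by rw [h2]
    _ = -(-1:ℤ)^(k-1) := by rw [pow_succ]; ring

lemma per_i (n i : ℕ) (hi : 1 ≤ i) :
    Polynomial.C (cCoeff n i) * (X^(n+i) + X^(n-i)) =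
      (∑ k ∈ Finset.Icc 1 (2*n),
        if 2*n = k*(k+2*i-1) then Polynomial.C ((-1:ℤ)^(k-1)) * Bp n i else 0)
      - ∑ k ∈ Finset.Icc 1 (2*n),
        if 2*n = k*(k+2*i+1) then Polynomial.C ((-1:ℤ)^(k-1)) * Bp n i else 0 := by
  rw [cCoeff, if_neg (by omega), map_sum, Finset.sum_mul, ← Finset.sum_sub_distrib]
  refine Finset.sum_congr rfl ?_
  intro k hk
  simp only [Finset.mem_Icc] at hk
  have h1 := neg_pow_pred hk.1
  split_ifs <;> simp [Bp, h1] <;> ring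

lemma per_0 (n : ℕ) :
    Polynomial.C (cCoeff n 0) * (X:Polynomial ℤ)^n =
      - ∑ k ∈ Finset.Icc 1 (2*n),
        if 2*n = k*(k+1) then Polynomial.C ((-1:ℤ)^(k-1)) * Bp n 0 else 0 := by
  rw [cCoeff, if_pos rfl, map_sum, Finset.sum_mul, ← Finset.sum_neg_distrib]
  refine Finset.sum_congr rfl ?_
  intro k hk
  simp only [Finset.mem_Icc] at hk
  have h1 := neg_pow_pred hk.1
  split_ifs <;> simp [Bp, h1] <;> ring

lemma pair_id (n i : ℕ) (h1 : 1 ≤ i) (h2 : i ≤ n) :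
    ((X:Polynomial ℤ) - 1)^2 * ∑ t ∈ Finset.range (2*i - 1), (X:Polynomial ℤ) ^ (n - i + t)
    = Bp n i - Bp n (i-1) := by
  set s := n - i with hs
  have hsum : ∑ t ∈ Finset.range (2*i-1), (X:Polynomial ℤ) ^ (s + t)
      = X^s * ∑ t ∈ Finset.range (2*i-1), X ^ t := by
    rw [Finset.mul_sum]; simp [pow_add]
  have hG : (∑ t ∈ Finset.range (2*i-1), (X:Polynomial ℤ) ^ t) * (X - 1) = X^(2*i-1) - 1 :=
    geom_sum_mul X (2*i-1)
  have key : ((X:Polynomial ℤ) - 1)^2 * (X^s * ∑ t ∈ Finset.range (2*i-1), X ^ t)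
      = X^s * X^(2*i-1) * X - X^s * X^(2*i-1) - X^s * X + X^s := by
    calc ((X:Polynomial ℤ) - 1)^2 * (X^s * ∑ t ∈ Finset.range (2*i-1), X ^ t)
        = X^s * ((∑ t ∈ Finset.range (2*i-1), X ^ t) * (X - 1)) * (X - 1) := by ring
      _ = X^s * (X^(2*i-1) - 1) * (X - 1) := by rw [hG]
      _ = _ := by ring
  rw [hsum, key, ← pow_add]
  rw [← pow_succ, ← pow_succ]
  have e1 : s + (2*i-1) + 1 = n + i := by omega
  have e2 : s + (2*i-1) = n + (i-1) := by omega
  have e3 : s + 1 = n - (i-1) := by omega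
  rw [e1, e2, e3]; unfold Bp; ring

lemma S1 (n : ℕ) (hn : 1 ≤ n) :
    ∑ p ∈ Fset n, Polynomial.C ((-1:ℤ)^(p.1-1)) * Bp n (i0 p)
    = ∑ q ∈ (Finset.Icc 1 n ×ˢ Finset.Icc 1 (2*n)).filter
        (fun q => 2*n = q.2*(q.2+2*q.1-1)),
        Polynomial.C ((-1:ℤ)^(q.2-1)) * Bp n q.1 := by
  refine Finset.sum_nbij' (fun p => (i0 p, p.1)) (fun q => (q.2, q.2 + 2*q.1 - 1))
    ?_ ?_ ?_ ?_ ?_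
  · intro p hp
    obtain ⟨hmul, h1, h2, hlt, hd, hi1, hin⟩ := Fset_facts hp
    simp only [mem_filter, mem_product, mem_Icc]
    refine ⟨⟨⟨hi1, hin⟩, ⟨h1, by nlinarith⟩⟩, by rw [← hmul]; congr 1; omega⟩
  · intro q hq
    simp only [mem_filter, mem_product, mem_Icc] at hq
    exact mem_Fset hn hq.1.2.1 hq.1.1.1 hq.2
  · intro p hp
    obtain ⟨hmul, h1, h2, hlt, hd, hi1, hin⟩ := Fset_facts hp
    have : p.1 + 2 * i0 p - 1 = p.2 := by omega
    simp [this]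
  · intro q hq
    simp only [mem_filter, mem_product, mem_Icc] at hq
    have : i0 (q.2, q.2 + 2*q.1 - 1) = q.1 := by unfold i0; omega
    simp [this]
  · intro p hp; rfl

lemma S2 (n : ℕ) (hn : 1 ≤ n) :
    ∑ p ∈ Fset n, Polynomial.C ((-1:ℤ)^(p.1-1)) * Bp n (i0 p - 1)
    = ∑ q ∈ (Finset.Icc 0 n ×ˢ Finset.Icc 1 (2*n)).filter
        (fun q => 2*n = q.2*(q.2+2*q.1+1)),
        Polynomial.C ((-1:ℤ)^(q.2-1)) * Bp n q.1 := by
  refine Finset.sum_nbij' (fun p => (i0 p - 1, p.1)) (fun q => (q.2, q.2 + 2*q.1 + 1))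
    ?_ ?_ ?_ ?_ ?_
  · intro p hp
    obtain ⟨hmul, h1, h2, hlt, hd, hi1, hin⟩ := Fset_facts hp
    simp only [mem_filter, mem_product, mem_Icc]
    refine ⟨⟨⟨Nat.zero_le _, by omega⟩, ⟨h1, by nlinarith⟩⟩, by rw [← hmul]; congr 1; omega⟩
  · intro q hq
    simp only [mem_filter, mem_product, mem_Icc] at hq
    exact mem_Fset' hn hq.1.2.1 hq.2
  · intro p hp
    obtain ⟨hmul, h1, h2, hlt, hd, hi1, hin⟩ := Fset_facts hp
    have : p.1 + 2 * (i0 p - 1) + 1 = p.2 := by omega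
    simp [this]
  · intro q hq
    simp only [mem_filter, mem_product, mem_Icc] at hq
    have : i0 (q.2, q.2 + 2*q.1 + 1) - 1 = q.1 := by unfold i0; omega
    simp [this]
  · intro p hp; rfl

lemma main_id (n : ℕ) (hn : 1 ≤ n) : Cpoly n = ((X:Polynomial ℤ) - 1)^2 * Ppoly n := by
  have step1 : ((X:Polynomial ℤ) - 1)^2 * Ppoly n
      = (∑ p ∈ Fset n, Polynomial.C ((-1:ℤ)^(p.1-1)) * Bp n (i0 p))
        - ∑ p ∈ Fset n, Polynomial.C ((-1:ℤ)^(p.1-1)) * Bp n (i0 p - 1) := by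
    rw [Ppoly, Finset.mul_sum, ← Finset.sum_sub_distrib]
    refine Finset.sum_congr rfl ?_
    intro p hp
    obtain ⟨hmul, h1, h2, hlt, hd, hi1, hin⟩ := Fset_facts hp
    calc ((X:Polynomial ℤ) - 1)^2 * (Polynomial.C ((-1:ℤ)^(p.1-1)) *
          ∑ t ∈ Finset.range (p.2 - p.1), X ^ (n - i0 p + t))
        = Polynomial.C ((-1:ℤ)^(p.1-1)) * (((X:Polynomial ℤ) - 1)^2 *
          ∑ t ∈ Finset.range (2 * i0 p - 1), X ^ (n - i0 p + t)) := by rw [hd]; ring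
      _ = Polynomial.C ((-1:ℤ)^(p.1-1)) * (Bp n (i0 p) - Bp n (i0 p - 1)) := by
          rw [pair_id n (i0 p) hi1 hin]
      _ = _ := by ring
  rw [step1, S1 n hn, S2 n hn, Finset.sum_filter, Finset.sum_filter,
    Finset.sum_product, Finset.sum_product]
  have hins : Finset.Icc 0 n = insert 0 (Finset.Icc 1 n) := by
    ext x; simp [Finset.mem_Icc]; omega
  rw [hins, Finset.sum_insert (by simp)]
  dsimp only
  have hLs : (∑ i ∈ Finset.Icc 1 n,
      Polynomial.C (cCoeff n i) * ((X:Polynomial ℤ)^(n+i) + X^(n-i))) =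
      ∑ i ∈ Finset.Icc 1 n,
      ((∑ k ∈ Finset.Icc 1 (2*n),
        if 2*n = k*(k+2*i-1) then Polynomial.C ((-1:ℤ)^(k-1)) * Bp n i else 0)
      - ∑ k ∈ Finset.Icc 1 (2*n),
        if 2*n = k*(k+2*i+1) then Polynomial.C ((-1:ℤ)^(k-1)) * Bp n i else 0) :=
    Finset.sum_congr rfl (fun i hi => per_i n i (Finset.mem_Icc.mp hi).1)
  rw [Cpoly, per_0 n, hLs, Finset.sum_sub_distrib]
  simp only [mul_zero, add_zero, Nat.mul_zero, Nat.add_zero]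
  ring

def Gset (n j : ℕ) : Finset (ℕ × ℕ) :=
  (Fset n).filter (fun p => n ≤ j + i0 p ∧ j + 2 ≤ n + i0 p)

lemma coeff_Ppoly (n j : ℕ) :
    (Ppoly n).coeff j = ∑ p ∈ Gset n j, (-1:ℤ)^(p.1-1) := by
  rw [Ppoly, Polynomial.finset_sum_coeff, Gset, Finset.sum_filter]
  refine Finset.sum_congr rfl ?_
  intro p hp
  obtain ⟨hmul, h1, h2, hlt, hd, hi1, hin⟩ := Fset_facts hp
  rw [Polynomial.coeff_C_mul, Polynomial.finset_sum_coeff]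
  simp only [Polynomial.coeff_X_pow]
  rw [Finset.sum_boole]
  split_ifs with hc
  · have he : (Finset.range (p.2-p.1)).filter (fun t => j = n - i0 p + t)
        = {j - (n - i0 p)} := by
      ext t
      simp only [Finset.mem_filter, Finset.mem_range, Finset.mem_singleton]
      omega
    rw [he]; simp
  · have he : (Finset.range (p.2-p.1)).filter (fun t => j = n - i0 p + t) = ∅ := by
      ext t
      simp only [Finset.mem_filter, Finset.mem_range, Finset.notMem_empty, iff_false,
        not_and]
      omega
    rw [he]; simp

lemma phi_fact {k : ℕ} (hk : k ≠ 0) (hdvd : 2 ∣ k) :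
    1 ≤ k / 2 ^ (k.factorization 2) ∧ 2 ^ (k.factorization 2) * (k / 2 ^ (k.factorization 2)) = k
    ∧ ¬ 2 ∣ (k / 2 ^ (k.factorization 2)) ∧ 1 ≤ k.factorization 2 := by
  refine ⟨Nat.ordCompl_pos 2 hk, Nat.ordProj_mul_ordCompl_eq_self k 2,
    Nat.not_dvd_ordCompl Nat.prime_two hk, ?_⟩
  exact (Nat.Prime.factorization_pos_of_dvd Nat.prime_two hk hdvd)

lemma inj_lemma (n j : ℕ) (hn : 1 ≤ n) :
    ((Gset n j).filter (fun p => ¬ Odd p.1)).card ≤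
    ((Gset n j).filter (fun p => Odd p.1)).card := by
  apply Finset.card_le_card_of_injOn
    (fun p => (p.1 / 2 ^ (p.1.factorization 2), 2 ^ (p.1.factorization 2) * p.2))
  · -- maps into
    intro p hp
    simp only [Gset, Finset.mem_coe, Finset.mem_filter] at hp ⊢
    obtain ⟨⟨hpF, hg1, hg2⟩, hodd⟩ := hp
    obtain ⟨hmul, h1, h2, hlt, hd, hi1, hin⟩ := Fset_facts hpF
    have hdvd : 2 ∣ p.1 := (Nat.not_odd_iff_even.mp hodd).two_dvd
    obtain ⟨hc1, hc2, hc3, hc4⟩ := phi_fact (by omega) hdvd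
    set a := p.1.factorization 2 with ha
    set k' := p.1 / 2 ^ a with hk'
    have hp2odd : Odd p.2 := by
      rcases Nat.even_or_odd p.2 with h | h
      · exfalso
        have : Even (p.1 + p.2) := ((even_iff_two_dvd).mpr hdvd).add h
        simp only [Fset, Finset.mem_filter] at hpF
        exact (Nat.not_odd_iff_even.mpr this) hpF.2.2
      · exact h
    have hka : 2 ≤ 2 ^ a := by
      calc 2 = 2^1 := by norm_num
      _ ≤ 2^a := Nat.pow_le_pow_right (by norm_num) hc4
    have hfst : k' ≤ p.1 := Nat.div_le_self _ _
    have hsnd : p.2 ≤ 2 ^ a * p.2 := Nat.le_mul_of_pos_left _ (by omega)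
    have hmul' : k' * (2 ^ a * p.2) = 2 * n := by
      calc k' * (2 ^ a * p.2) = (2 ^ a * k') * p.2 := by ring
        _ = p.1 * p.2 := by rw [hc2]
        _ = 2 * n := hmul
    have hodd' : Odd k' := Nat.odd_iff.mpr (Nat.two_dvd_ne_zero.mp hc3)
    have hFmem : (k', 2 ^ a * p.2) ∈ Fset n := by
      simp only [Fset, Finset.mem_filter, Nat.mem_divisorsAntidiagonal]
      refine ⟨⟨hmul', by omega⟩, by omega, ?_⟩
      · show Odd (k' + 2 ^ a * p.2)
        have heven : Even (2 ^ a * p.2) := by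
          refine Even.mul_right ?_ _
          exact (Nat.even_pow' (by omega)).mpr even_two
        exact hodd'.add_even heven
    have hi0 : i0 p ≤ i0 (k', 2 ^ a * p.2) := by
      unfold i0; dsimp only; omega
    exact ⟨⟨hFmem, by omega, by omega⟩, hodd'⟩
  · -- injective
    intro p hp q hq heq
    simp only [Gset, Finset.mem_coe, Finset.mem_filter] at hp hq
    obtain ⟨⟨hpF, _, _⟩, hpo⟩ := hp
    obtain ⟨⟨hqF, _, _⟩, hqo⟩ := hq
    obtain ⟨hmulp, h1p, h2p, hltp, _, _, _⟩ := Fset_facts hpF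
    obtain ⟨hmulq, h1q, h2q, hltq, _, _, _⟩ := Fset_facts hqF
    have hdvdp : 2 ∣ p.1 := (Nat.not_odd_iff_even.mp hpo).two_dvd
    have hdvdq : 2 ∣ q.1 := (Nat.not_odd_iff_even.mp hqo).two_dvd
    have hp2odd : Odd p.2 := by
      rcases Nat.even_or_odd p.2 with h | h
      · exfalso
        have : Even (p.1 + p.2) := ((even_iff_two_dvd).mpr hdvdp).add h
        simp only [Fset, Finset.mem_filter] at hpF
        exact (Nat.not_odd_iff_even.mpr this) hpF.2.2
      · exact h
    have hq2odd : Odd q.2 := by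
      rcases Nat.even_or_odd q.2 with h | h
      · exfalso
        have : Even (q.1 + q.2) := ((even_iff_two_dvd).mpr hdvdq).add h
        simp only [Fset, Finset.mem_filter] at hqF
        exact (Nat.not_odd_iff_even.mpr this) hqF.2.2
      · exact h
    have h2 := congrArg Prod.snd heq
    dsimp only at h2
    -- 2^a * p.2 = 2^b * q.2 with p.2 q.2 odd
    set a := p.1.factorization 2
    set b := q.1.factorization 2
    have hof : ∀ m : ℕ, Odd m → m.factorization 2 = 0 := fun m hm =>
      Nat.factorization_eq_zero_of_not_dvd (Nat.two_dvd_ne_zero.mpr (Nat.odd_iff.mp hm))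
    have hfa : ((2:ℕ) ^ a * p.2).factorization 2 = a := by
      rw [Nat.factorization_mul (by positivity) (by omega),
        Nat.Prime.factorization_pow Nat.prime_two]
      simp [hof p.2 hp2odd]
    have hfb : ((2:ℕ) ^ b * q.2).factorization 2 = b := by
      rw [Nat.factorization_mul (by positivity) (by omega),
        Nat.Prime.factorization_pow Nat.prime_two]
      simp [hof q.2 hq2odd]
    have hab : a = b := by rw [← hfa, ← hfb, h2]
    have hsnd : p.2 = q.2 := by
      rw [hab] at h2
      exact Nat.eq_of_mul_eq_mul_left (by positivity) h2
    have hfst : p.1 = q.1 := by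
      have : p.1 * p.2 = q.1 * p.2 := by rw [hmulp, hsnd, hmulq]
      exact Nat.eq_of_mul_eq_mul_right (by omega) this
    exact Prod.ext hfst hsnd

lemma coeff_Ppoly_nonneg (n j : ℕ) (hn : 1 ≤ n) : 0 ≤ (Ppoly n).coeff j := by
  rw [coeff_Ppoly]
  have hsplit : ∑ p ∈ Gset n j, (-1:ℤ)^(p.1-1)
      = ∑ p ∈ Gset n j, (if Odd p.1 then (1:ℤ) else -1) := by
    refine Finset.sum_congr rfl ?_
    intro p hp
    have h1 : 1 ≤ p.1 := (Fset_facts (Finset.mem_filter.mp hp).1).2.1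
    split_ifs with h
    · refine Even.neg_one_pow ?_
      obtain ⟨m, hm⟩ := h
      exact ⟨m, by omega⟩
    · refine Odd.neg_one_pow ?_
      obtain ⟨m, hm⟩ := Nat.not_odd_iff_even.mp h
      exact ⟨m - 1, by omega⟩
  rw [hsplit, Finset.sum_ite, Finset.sum_const, Finset.sum_const]
  have hcard := inj_lemma n j hn
  have hcard' : (((Gset n j).filter (fun p => ¬ Odd p.1)).card : ℤ) ≤
      ((Gset n j).filter (fun p => Odd p.1)).card := by exact_mod_cast hcard
  simp only [smul_eq_mul, mul_one, mul_neg_one, nsmul_eq_mul]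
  omega

lemma Gset_top (n : ℕ) (hn : 1 ≤ n) : Gset n (2*n-2) = {(1, 2*n)} := by
  ext p
  simp only [Gset, Finset.mem_filter, Finset.mem_singleton]
  constructor
  · rintro ⟨hpF, hg1, hg2⟩
    obtain ⟨hmul, h1, h2, hlt, hd, hi1, hin⟩ := Fset_facts hpF
    have hp2 : p.2 = 2*n := by unfold i0 at hg2; omega
    have hp1 : p.1 = 1 := by
      refine Nat.eq_of_mul_eq_mul_right (show 0 < 2*n by omega) ?_
      calc p.1 * (2*n) = p.1 * p.2 := by rw [hp2]
        _ = 1 * (2*n) := by rw [hmul, one_mul]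
    exact Prod.ext hp1 hp2
  · rintro rfl
    have hF : ((1:ℕ), 2*n) ∈ Fset n := by
      simp only [Fset, Finset.mem_filter, Nat.mem_divisorsAntidiagonal]
      exact ⟨⟨one_mul _, by omega⟩, by omega, ⟨n, by ring⟩⟩
    refine ⟨hF, ?_, ?_⟩ <;> unfold i0 <;> omega

lemma Gset_empty (n j : ℕ) (hj : 2*n-2 < j) : Gset n j = ∅ := by
  refine Finset.eq_empty_of_forall_notMem ?_
  intro p hp
  rw [Gset, Finset.mem_filter] at hp
  have := Fset_facts hp.1
  omega

theorem Cpoly_eq_sq_mul_monic_nonneg (n : ℕ) (hn : 1 ≤ n) :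
    ∃ P : Polynomial ℤ, Cpoly n = (Polynomial.X - 1) ^ 2 * P ∧ P.Monic ∧
      P.natDegree = 2 * n - 2 ∧ ∀ j, 0 ≤ P.coeff j := by
  have hc_top : (Ppoly n).coeff (2*n-2) = 1 := by
    rw [coeff_Ppoly, Gset_top n hn]; simp
  have hc_hi : ∀ m, 2*n-2 < m → (Ppoly n).coeff m = 0 := by
    intro m hm
    rw [coeff_Ppoly, Gset_empty n m hm, Finset.sum_empty]
  have hdeg_le : (Ppoly n).natDegree ≤ 2*n-2 :=
    Polynomial.natDegree_le_iff_coeff_eq_zero.mpr hc_hi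
  refine ⟨Ppoly n, main_id n hn, ?_, ?_, fun j => coeff_Ppoly_nonneg n j hn⟩
  · exact Polynomial.monic_of_natDegree_le_of_coeff_eq_one _ hdeg_le hc_top
  · exact le_antisymm hdeg_le
      (Polynomial.le_natDegree_of_ne_zero (by rw [hc_top]; exact one_ne_zero))
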